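/- Let f : ℝ^d → ℝ be a proper, nonnegative C² function, and let α > 0, β > 0 and a ∈ ℝ be constants such that Δf − α|∇f|² + βf ≤ a and Δf ≤ a hold everywhere on ℝ^d. Then for every r ≥ 1, the Lebesgue volume of the sublevel set D_r = {x ∈ ℝ^d : 2√(f(x)) ≤ √(2β)·r} satisfies Vol(D_r) ≤ e^{αβ/2} · r^{2αa/β} · ∫_{D_r} e^{−αf} dx. -/

import Mathlib

set_option maxHeartbeats 1000000


open MeasureTheory Real Gradient

/-- The Laplacian of a function on Euclidean space, as the trace of the second derivative. -/
noncomputable def lap {d : ℕ} (f : EuclideanSpace ℝ (Fin d) → ℝ)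
    (x : EuclideanSpace ℝ (Fin d)) : ℝ :=
  ∑ i : Fin d,
    iteratedFDeriv ℝ 2 f x ![EuclideanSpace.single i 1, EuclideanSpace.single i 1]



namespace VolAux

lemma enig_monotone : Monotone expNegInvGlue := by
  have hd : ∀ x : ℝ, HasDerivAt expNegInvGlue
      (((Polynomial.X ^ 2 : Polynomial ℝ)).eval x⁻¹ * expNegInvGlue x) x := by
    intro x
    simpa using expNegInvGlue.hasDerivAt_polynomial_eval_inv_mul 1 x
  apply monotone_of_deriv_nonneg (fun x => (hd x).differentiableAt)
  intro x
  rw [(hd x).deriv]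
  have h := expNegInvGlue.nonneg x
  simp only [Polynomial.eval_pow, Polynomial.eval_X]
  positivity

lemma st_monotone : Monotone Real.smoothTransition := by
  intro x y hxy
  unfold Real.smoothTransition
  rw [div_le_div_iff₀ (Real.smoothTransition.pos_denom x) (Real.smoothTransition.pos_denom y)]
  have h1 := enig_monotone hxy
  have h2 := enig_monotone (by linarith : 1 - y ≤ 1 - x)
  nlinarith [expNegInvGlue.nonneg x, expNegInvGlue.nonneg (1 - y),
    expNegInvGlue.nonneg (1 - x), expNegInvGlue.nonneg y]

lemma deriv_nonneg_of_monotone {φ : ℝ → ℝ} (hm : Monotone φ) {c x : ℝ}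
    (h : HasDerivAt φ c x) : 0 ≤ c := by
  have h' := hasDerivAt_iff_tendsto_slope.mp h
  have h'' : Filter.Tendsto (slope φ x) (nhdsWithin x (Set.Ioi x)) (nhds c) :=
    h'.mono_left (nhdsWithin_mono _ (fun y hy => ne_of_gt hy))
  refine ge_of_tendsto h'' ?_
  filter_upwards [self_mem_nhdsWithin] with y hy
  rw [slope_def_field]
  have hxy : x < y := hy
  exact div_nonneg (by have := hm hxy.le; simpa [sub_nonneg] using this)
    (by linarith)

lemma stderiv_nonneg (y : ℝ) : 0 ≤ deriv Real.smoothTransition y :=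
  deriv_nonneg_of_monotone st_monotone
    ((Real.smoothTransition.contDiff (n := 1)).differentiable (by norm_num) y).hasDerivAt

variable {d : ℕ}

lemma grad_apply (f : EuclideanSpace ℝ (Fin d) → ℝ) (x : EuclideanSpace ℝ (Fin d)) (i : Fin d) :
    (∇ f x) i = fderiv ℝ f x (EuclideanSpace.single i 1) := by
  have h : (inner ℝ ((InnerProductSpace.toDual ℝ (EuclideanSpace ℝ (Fin d))).symm
      (fderiv ℝ f x)) (EuclideanSpace.single i 1) : ℝ)
      = fderiv ℝ f x (EuclideanSpace.single i 1) :=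
    InnerProductSpace.toDual_symm_apply
  rw [gradient]
  rw [EuclideanSpace.inner_single_right] at h
  simpa using h

lemma norm_grad_sq (f : EuclideanSpace ℝ (Fin d) → ℝ) (x : EuclideanSpace ℝ (Fin d)) :
    ‖∇ f x‖ ^ 2 = ∑ i, (fderiv ℝ f x (EuclideanSpace.single i 1)) ^ 2 := by
  rw [EuclideanSpace.norm_eq, Real.sq_sqrt (by positivity)]
  exact Finset.sum_congr rfl fun i _ => by rw [← grad_apply]; simp [sq_abs]

lemma second_deriv_eq {f : EuclideanSpace ℝ (Fin d) → ℝ} (hf : ContDiff ℝ 2 f)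
    (x v w : EuclideanSpace ℝ (Fin d)) :
    iteratedFDeriv ℝ 2 f x ![v, w] = fderiv ℝ (fun y => fderiv ℝ f y w) x v := by
  rw [iteratedFDeriv_two_apply]
  have hd : DifferentiableAt ℝ (fderiv ℝ f) x :=
    (hf.fderiv_right (m := 1) le_rfl).differentiable (by norm_num) x
  rw [fderiv_clm_apply hd (differentiableAt_const w)]
  simp

lemma lap_eq {f : EuclideanSpace ℝ (Fin d) → ℝ} (hf : ContDiff ℝ 2 f)
    (x : EuclideanSpace ℝ (Fin d)) :
    lap f x = ∑ i, fderiv ℝ (fun y => fderiv ℝ f y (EuclideanSpace.single i 1)) x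
      (EuclideanSpace.single i 1) := by
  unfold lap
  exact Finset.sum_congr rfl fun i _ => by
    rw [second_deriv_eq hf x (EuclideanSpace.single i 1) (EuclideanSpace.single i 1)]

lemma di_contDiff {f : EuclideanSpace ℝ (Fin d) → ℝ} (hf : ContDiff ℝ 2 f) (i : Fin d) :
    ContDiff ℝ 1 (fun y => fderiv ℝ f y (EuclideanSpace.single i 1)) :=
  (hf.fderiv_right (m := 1) le_rfl).clm_apply contDiff_const

lemma lap_continuous {f : EuclideanSpace ℝ (Fin d) → ℝ} (hf : ContDiff ℝ 2 f) :
    Continuous (lap f) := by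
  have : ∀ i : Fin d, Continuous (fun x => fderiv ℝ
      (fun y => fderiv ℝ f y (EuclideanSpace.single i 1)) x (EuclideanSpace.single i 1)) := by
    intro i
    exact (((di_contDiff hf i).fderiv_right (m := 0) le_rfl).clm_apply contDiff_const).continuous
  have hc : Continuous (fun x => ∑ i : Fin d, fderiv ℝ
      (fun y => fderiv ℝ f y (EuclideanSpace.single i 1)) x (EuclideanSpace.single i 1)) :=
    continuous_finset_sum _ (fun i _ => this i)
  exact hc.congr (fun x => (lap_eq hf x).symm)

end VolAux
variable {d : ℕ}

lemma u_hasFDerivAt {f : EuclideanSpace ℝ (Fin d) → ℝ} (hf : ContDiff ℝ 2 f) (s : ℝ)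
    (x : EuclideanSpace ℝ (Fin d)) :
    HasFDerivAt (fun y => exp (-(s * f y))) ((-s * exp (-(s * f x))) • fderiv ℝ f x) x := by
  have hfd : HasFDerivAt f (fderiv ℝ f x) x :=
    (hf.differentiable (by norm_num) x).hasFDerivAt
  have h1 : HasFDerivAt (fun y => -(s * f y)) ((-s) • fderiv ℝ f x) x := by
    have h := (hfd.const_mul s).neg
    rwa [← neg_smul] at h
  have h2 := (Real.hasDerivAt_exp (-(s * f x))).comp_hasFDerivAt x h1
  have : exp (-(s * f x)) • ((-s) • fderiv ℝ f x) = (-s * exp (-(s * f x))) • fderiv ℝ f x := by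
    rw [smul_smul]; ring_nf
  rwa [this] at h2

lemma u_contDiff {f : EuclideanSpace ℝ (Fin d) → ℝ} (hf : ContDiff ℝ 2 f) (s : ℝ) :
    ContDiff ℝ 2 (fun y => exp (-(s * f y))) :=
  Real.contDiff_exp.comp ((contDiff_const.mul hf).neg)

namespace VolAux2
open VolAux
variable {d : ℕ}
local notation "E" => EuclideanSpace ℝ (Fin d)
local notation "ee" i => EuclideanSpace.single i (1:ℝ)

lemma div_ineq (f : EuclideanSpace ℝ (Fin d) → ℝ) (hf : ContDiff ℝ 2 f)
    (hf0 : ∀ x, 0 ≤ f x)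
    (hproper : ∀ K : Set ℝ, IsCompact K → IsCompact (f ⁻¹' K))
    (s t : ℝ) (hs : 0 < s) :
    s * ∫ x in f ⁻¹' Set.Iic t,
        (∑ i : Fin d, (fderiv ℝ f x (EuclideanSpace.single i 1)) ^ 2) * exp (-(s * f x))
      ≤ ∫ x in f ⁻¹' Set.Iic t, lap f x * exp (-(s * f x)) := by
  classical
  set u : E → ℝ := fun y => exp (-(s * f y)) with hu_def
  set q : Fin d → E → ℝ := fun i y => fderiv ℝ f y (EuclideanSpace.single i 1) with hq_def
  set G : E → ℝ := fun x => ∑ i : Fin d, (q i x) ^ 2 with hG_def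
  set Φ : E → ℝ := fun x => (lap f x - s * G x) * u x with hΦ_def
  have hfc : Continuous f := hf.continuous
  have hfd : Differentiable ℝ f := hf.differentiable (by norm_num)
  have hqc : ∀ i, Continuous (q i) := fun i => (di_contDiff hf i).continuous
  have huc : Continuous u := (u_contDiff hf s).continuous
  have hu2 : ContDiff ℝ 2 u := u_contDiff hf s
  have hGc : Continuous G := continuous_finset_sum _ (fun i _ => (hqc i).pow 2)
  have hlapc : Continuous (lap f) := lap_continuous hf
  have hΦc : Continuous Φ := ((hlapc.sub (continuous_const.mul hGc)).mul huc)
  set D : Set E := f ⁻¹' Set.Iic t with hD_def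
  have hDeq : D = f ⁻¹' Set.Icc 0 t := by
    ext x; simp [hD_def, Set.mem_preimage, hf0 x]
  have hDcomp : IsCompact D := hDeq ▸ hproper _ isCompact_Icc
  have hDmeas : MeasurableSet D := (isClosed_Iic.preimage hfc).measurableSet
  set K : Set E := f ⁻¹' Set.Icc 0 (t + 1) with hK_def
  have hKcomp : IsCompact K := hproper _ isCompact_Icc
  have hKmeas : MeasurableSet K := (isClosed_Icc.preimage hfc).measurableSet
  -- the bound for dominated convergence
  set bound : E → ℝ := K.indicator (fun x => |Φ x|) with hbound_def
  have hbound_int : Integrable bound :=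
    (hΦc.abs.continuousOn.integrableOn_compact hKcomp).integrable_indicator hKmeas
  -- the cutoff sequence
  set η : ℕ → E → ℝ := fun n x => Real.smoothTransition ((t - f x) * (n + 1) + 1) with hη_def
  -- main inequality for each n
  have main : ∀ n : ℕ, 0 ≤ ∫ x, η n x * Φ x := by
    intro n
    set c : ℝ := (n : ℝ) + 1 with hc_def
    have hc : (0:ℝ) < c := by positivity
    have hc1 : (1:ℝ) ≤ c := by simp [hc_def]
    set ψ' : ℝ → ℝ := fun y => deriv Real.smoothTransition ((t - y) * c + 1) * (-c) with hψ'_def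
    have hψ'np : ∀ y, ψ' y ≤ 0 := by
      intro y
      have h0 := stderiv_nonneg ((t - y) * c + 1)
      have he : ψ' y = -(deriv Real.smoothTransition ((t - y) * c + 1) * c) := by
        simp only [hψ'_def]; ring
      rw [he]; nlinarith
    have hψ'c : Continuous ψ' :=
      (((Real.smoothTransition.contDiff (n := 2)).continuous_deriv (by norm_num)).comp
        (((continuous_const.sub continuous_id).mul continuous_const).add
          continuous_const)).mul continuous_const
    have hηcd : ContDiff ℝ 2 (η n) :=
      (Real.smoothTransition.contDiff (n := 2)).comp
        (((contDiff_const.sub hf).mul contDiff_const).add contDiff_const)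
    have hηc : Continuous (η n) := hηcd.continuous
    have hη01 : ∀ x, 0 ≤ η n x ∧ η n x ≤ 1 := fun x =>
      ⟨Real.smoothTransition.nonneg _, Real.smoothTransition.le_one _⟩
    have hη0 : ∀ x ∉ K, η n x = 0 := by
      intro x hx
      have hfx : t + 1 < f x := by
        by_contra hcon
        exact hx ⟨hf0 x, by linarith⟩
      apply Real.smoothTransition.zero_of_nonpos
      have h1 : t - f x ≤ -1 := by linarith
      nlinarith
    have hηcs : HasCompactSupport (η n) := HasCompactSupport.intro hKcomp hη0
    have hηfd : ∀ x, HasFDerivAt (η n) (ψ' (f x) • fderiv ℝ f x) x := by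
      intro x
      have h1 : HasFDerivAt (fun y => (t - f y) * c + 1) ((-c) • fderiv ℝ f x) x := by
        have h := (((hfd x).hasFDerivAt.const_sub t).mul_const c).add_const 1
        have he : c • (-fderiv ℝ f x) = (-c) • fderiv ℝ f x := by
          rw [smul_neg, ← neg_smul]
        rwa [he] at h
      have hst : HasDerivAt Real.smoothTransition
          (deriv Real.smoothTransition ((t - f x) * c + 1)) ((t - f x) * c + 1) :=
        ((Real.smoothTransition.contDiff (n := 1)).differentiable (by norm_num) _).hasDerivAt
      have h2 := hst.comp_hasFDerivAt x h1
      have he2 : deriv Real.smoothTransition ((t - f x) * c + 1) • ((-c) • fderiv ℝ f x)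
          = ψ' (f x) • fderiv ℝ f x := by
        rw [smul_smul]
      rwa [he2] at h2
    have hηfd' : ∀ (i : Fin d) (x : EuclideanSpace ℝ (Fin d)),
        fderiv ℝ (η n) x (EuclideanSpace.single i 1) = ψ' (f x) * q i x := fun i x => by
      rw [(hηfd x).fderiv]; rfl
    -- vector field components
    set p : EuclideanSpace ℝ (Fin d) → ℝ := fun x => -s * u x with hp_def
    set g : Fin d → EuclideanSpace ℝ (Fin d) → ℝ := fun i x => p x * q i x with hg_def
    set H : Fin d → EuclideanSpace ℝ (Fin d) → ℝ :=
      fun i x => fderiv ℝ (q i) x (EuclideanSpace.single i 1) with hH_def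
    have hpfd : ∀ x, HasFDerivAt p ((-s) • ((-s * u x) • fderiv ℝ f x)) x :=
      fun x => (u_hasFDerivAt hf s x).const_mul (-s)
    have hqfd : ∀ (i : Fin d) x, HasFDerivAt (q i) (fderiv ℝ (q i) x) x :=
      fun i x => (((di_contDiff hf i).differentiable (by norm_num)) x).hasFDerivAt
    have hgfd : ∀ (i : Fin d) x, HasFDerivAt (g i)
        (p x • fderiv ℝ (q i) x + q i x • ((-s) • ((-s * u x) • fderiv ℝ f x))) x :=
      fun i x => (hpfd x).mul (hqfd i x)
    have hDg : ∀ (i : Fin d) x, fderiv ℝ (g i) x (EuclideanSpace.single i 1)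
        = p x * H i x + s * s * u x * (q i x * q i x) := by
      intro i x
      rw [(hgfd i x).fderiv]
      simp only [ContinuousLinearMap.add_apply, ContinuousLinearMap.coe_smul',
        Pi.smul_apply, smul_eq_mul, hH_def]
      have : fderiv ℝ f x (EuclideanSpace.single i 1) = q i x := rfl
      rw [this]
      try ring
    have hHc : ∀ i : Fin d, Continuous (H i) := fun i =>
      ((((di_contDiff hf i).fderiv_right (m := 0) le_rfl).clm_apply contDiff_const)).continuous
    have hpc : Continuous p := continuous_const.mul huc
    have hgc : ∀ i : Fin d, Continuous (g i) := fun i => hpc.mul (hqc i)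
    have hgcd : ∀ i : Fin d, ContDiff ℝ 1 (g i) := fun i =>
      (contDiff_const.mul (hu2.of_le (by norm_num))).mul (di_contDiff hf i)
    have hDgc : ∀ i : Fin d, Continuous
        (fun x => fderiv ℝ (g i) x (EuclideanSpace.single i 1)) := fun i =>
      ((hpc.mul (hHc i)).add (((continuous_const.mul huc).mul
        ((hqc i).mul (hqc i))))).congr (fun x => by exact (hDg i x).symm)
    have ibp : ∀ i : Fin d, ∫ x, η n x * fderiv ℝ (g i) x (EuclideanSpace.single i 1)
        = - ∫ x, fderiv ℝ (η n) x (EuclideanSpace.single i 1) * g i x := by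
      intro i
      have hfds : HasCompactSupport
          (fun x => fderiv ℝ (η n) x (EuclideanSpace.single i (1:ℝ))) :=
        hηcs.fderiv_apply ℝ (EuclideanSpace.single i 1)
      apply integral_mul_fderiv_eq_neg_fderiv_mul_of_integrable
      · exact ((((hψ'c.comp hfc).mul (hqc i)).mul (hgc i)).congr
            (fun x => (congrArg (· * g i x) (hηfd' i x)).symm)).integrable_of_hasCompactSupport
          hfds.mul_right
      · exact (hηc.mul (hDgc i)).integrable_of_hasCompactSupport hηcs.mul_right
      · exact (hηc.mul (hgc i)).integrable_of_hasCompactSupport hηcs.mul_right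
      · exact fun x _ => (hηfd x).differentiableAt
      · exact fun x _ => (hgcd i).differentiable (by norm_num) x
    have hlapsum : ∀ x, lap f x = ∑ i : Fin d, H i x := fun x => by
      rw [lap_eq hf x]
    have hint_left : ∀ i : Fin d, Integrable
        (fun x => η n x * fderiv ℝ (g i) x (EuclideanSpace.single i 1)) := fun i =>
      (hηc.mul (hDgc i)).integrable_of_hasCompactSupport hηcs.mul_right
    have hint_right : ∀ i : Fin d, Integrable
        (fun x => fderiv ℝ (η n) x (EuclideanSpace.single i 1) * g i x) := fun i =>
      ((((hψ'c.comp hfc).mul (hqc i)).mul (hgc i)).congr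
          (fun x => (congrArg (· * g i x) (hηfd' i x)).symm)).integrable_of_hasCompactSupport
        ((hηcs.fderiv_apply ℝ (EuclideanSpace.single i 1)).mul_right)
    have hsum1 : ∫ x, (-s) * (η n x * Φ x)
        = ∑ i : Fin d, ∫ x, η n x * fderiv ℝ (g i) x (EuclideanSpace.single i 1) := by
      rw [← integral_finset_sum _ (fun i _ => hint_left i)]
      congr 1
      funext x
      simp only [hDg]
      have e2 : ∑ i : Fin d, (η n x * (p x * H i x + s * s * u x * (q i x * q i x)))
          = η n x * p x * (∑ i : Fin d, H i x)
            + η n x * (s * s * u x) * (∑ i : Fin d, q i x ^ 2) := by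
        rw [Finset.mul_sum, Finset.mul_sum, ← Finset.sum_add_distrib]
        exact Finset.sum_congr rfl fun i _ => by ring
      rw [e2, ← hlapsum x]
      have e3 : G x = ∑ i : Fin d, q i x ^ 2 := rfl
      rw [← e3]
      simp only [hΦ_def, hp_def]
      ring
    have hsum2 : ∑ i : Fin d, ∫ x, fderiv ℝ (η n) x (EuclideanSpace.single i 1) * g i x
        = ∫ x, ψ' (f x) * p x * G x := by
      rw [← integral_finset_sum _ (fun i _ => hint_right i)]
      congr 1
      funext x
      simp only [hηfd']
      have e4 : ∑ i : Fin d, (ψ' (f x) * q i x * g i x)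
          = ψ' (f x) * p x * (∑ i : Fin d, q i x ^ 2) := by
        rw [Finset.mul_sum]
        exact Finset.sum_congr rfl fun i _ => by simp only [hg_def]; ring
      rw [e4]
      try rfl
    have hkey : ∫ x, (-s) * (η n x * Φ x) = - ∫ x, ψ' (f x) * p x * G x := by
      rw [hsum1, ← hsum2]
      rw [← Finset.sum_neg_distrib]
      exact Finset.sum_congr rfl fun i _ => ibp i
    have hnonneg : 0 ≤ ∫ x, ψ' (f x) * p x * G x := by
      apply integral_nonneg
      intro x
      simp only [Pi.zero_apply]
      have h1 : ψ' (f x) ≤ 0 := hψ'np (f x)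
      have h2 : p x ≤ 0 := by
        have : 0 < u x := Real.exp_pos _
        simp only [hp_def]
        nlinarith
      have h3 : 0 ≤ G x := Finset.sum_nonneg fun i _ => sq_nonneg _
      have h12 : 0 ≤ ψ' (f x) * p x := by
        nlinarith [mul_nonneg (neg_nonneg.mpr h1) (neg_nonneg.mpr h2)]
      exact mul_nonneg h12 h3
    have hfin : (-s) * ∫ x, η n x * Φ x ≤ 0 := by
      rw [← integral_const_mul]
      rw [hkey]
      linarith
    nlinarith [hfin]
  -- limit passage
  have hηcont : ∀ n : ℕ, Continuous (η n) :=
    fun n => Real.smoothTransition.continuous.comp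
      (((continuous_const.sub hfc).mul continuous_const).add continuous_const)
  have hη0' : ∀ (n : ℕ) (x : EuclideanSpace ℝ (Fin d)), x ∉ K → η n x = 0 := by
    intro n x hx
    have hfx : t + 1 < f x := by
      by_contra hcon
      exact hx ⟨hf0 x, by linarith⟩
    apply Real.smoothTransition.zero_of_nonpos
    have h1 : t - f x ≤ -1 := by linarith
    have hc1 : (1:ℝ) ≤ (n:ℝ) + 1 := by
      have : (0:ℝ) ≤ (n:ℝ) := Nat.cast_nonneg n
      linarith
    nlinarith
  have hbnd : ∀ n : ℕ, ∀ᵐ x, ‖η n x * Φ x‖ ≤ bound x := by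
    intro n
    filter_upwards with x
    by_cases hx : x ∈ K
    · rw [hbound_def, Set.indicator_of_mem hx]
      rw [norm_mul]
      have h1 : ‖η n x‖ ≤ 1 := by
        rw [Real.norm_eq_abs, abs_of_nonneg (Real.smoothTransition.nonneg _)]
        exact Real.smoothTransition.le_one _
      calc ‖η n x‖ * ‖Φ x‖ ≤ 1 * ‖Φ x‖ :=
            mul_le_mul_of_nonneg_right h1 (norm_nonneg _)
        _ = |Φ x| := by rw [one_mul, Real.norm_eq_abs]
    · rw [hbound_def, Set.indicator_of_notMem hx, hη0' n x hx]
      simp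
  have hconv : ∀ᵐ x, Filter.Tendsto (fun n : ℕ => η n x * Φ x) Filter.atTop
      (nhds (D.indicator Φ x)) := by
    filter_upwards with x
    by_cases hfx : f x ≤ t
    · have hmem : x ∈ D := hfx
      rw [Set.indicator_of_mem hmem]
      have : ∀ n : ℕ, η n x * Φ x = Φ x := by
        intro n
        have h1 : (1:ℝ) ≤ (t - f x) * ((n:ℝ) + 1) + 1 := by
          have : (0:ℝ) ≤ (t - f x) * ((n:ℝ) + 1) := by
            apply mul_nonneg (by linarith)
            positivity
          linarith
        rw [hη_def]
        simp only [Real.smoothTransition.one_of_one_le h1, one_mul]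
      simp only [this]
      exact tendsto_const_nhds
    · have hmem : x ∉ D := hfx
      rw [Set.indicator_of_notMem hmem]
      have hpos : 0 < f x - t := by linarith
      obtain ⟨N, hN⟩ := exists_nat_ge (1 / (f x - t))
      apply Filter.Tendsto.congr' _ tendsto_const_nhds
      rw [Filter.EventuallyEq, Filter.eventually_atTop]
      refine ⟨N, fun n hn => ?_⟩
      have harg : (t - f x) * ((n:ℝ) + 1) + 1 ≤ 0 := by
        have h1 : 1 / (f x - t) ≤ (n:ℝ) + 1 := by
          have : (N:ℝ) ≤ (n:ℝ) := Nat.cast_le.mpr hn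
          linarith
        have h2 : 1 ≤ (f x - t) * ((n:ℝ) + 1) := by
          rw [div_le_iff₀ hpos] at h1
          nlinarith
        nlinarith
      rw [hη_def]
      simp only [Real.smoothTransition.zero_of_nonpos harg, zero_mul]
  have hlim := tendsto_integral_of_dominated_convergence bound
    (fun n => ((hηcont n).mul hΦc).aestronglyMeasurable) hbound_int hbnd hconv
  have h0 : 0 ≤ ∫ x, D.indicator Φ x := ge_of_tendsto' hlim main
  rw [integral_indicator hDmeas] at h0
  have hint1 : IntegrableOn (fun x => lap f x * u x) D :=
    ((hlapc.mul huc).continuousOn).integrableOn_compact hDcomp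
  have hint2 : IntegrableOn (fun x => s * (G x * u x)) D :=
    ((continuous_const.mul (hGc.mul huc)).continuousOn).integrableOn_compact hDcomp
  have hsplit : ∫ x in D, Φ x
      = (∫ x in D, lap f x * u x) - ∫ x in D, s * (G x * u x) := by
    rw [← integral_sub hint1 hint2]
    congr 1
    funext x
    simp only [hΦ_def]
    ring
  rw [hsplit] at h0
  have hmulout : ∫ x in D, s * (G x * u x) = s * ∫ x in D, G x * u x :=
    integral_const_mul s _
  rw [hmulout] at h0
  linarith

lemma key_moment (f : EuclideanSpace ℝ (Fin d) → ℝ) (hf : ContDiff ℝ 2 f)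
    (hf0 : ∀ x, 0 ≤ f x)
    (hproper : ∀ K : Set ℝ, IsCompact K → IsCompact (f ⁻¹' K))
    (α β a : ℝ) (hα : 0 < α) (hβ : 0 < β)
    (h1 : ∀ x, lap f x - α * ‖∇ f x‖ ^ 2 + β * f x ≤ a)
    (h2 : ∀ x, lap f x ≤ a)
    (t s : ℝ) (hs0 : 0 < s) (hsα : s ≤ α) :
    β * ∫ x in f ⁻¹' Set.Iic t, f x * exp (-(s * f x))
      ≤ (a * α / s) * ∫ x in f ⁻¹' Set.Iic t, exp (-(s * f x)) := by
  classical
  set D : Set (EuclideanSpace ℝ (Fin d)) := f ⁻¹' Set.Iic t with hD_def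
  have hfc : Continuous f := hf.continuous
  have hDeq : D = f ⁻¹' Set.Icc 0 t := by
    ext x; simp [hD_def, Set.mem_preimage, hf0 x]
  have hDcomp : IsCompact D := hDeq ▸ hproper _ isCompact_Icc
  have hDmeas : MeasurableSet D := (isClosed_Iic.preimage hfc).measurableSet
  set u : EuclideanSpace ℝ (Fin d) → ℝ := fun y => exp (-(s * f y)) with hu_def
  set W : EuclideanSpace ℝ (Fin d) → ℝ :=
    fun x => ∑ i : Fin d, (fderiv ℝ f x (EuclideanSpace.single i 1)) ^ 2 with hW_def
  have huc : Continuous u := (u_contDiff hf s).continuous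
  have hWc : Continuous W := continuous_finset_sum _
    (fun i _ => ((di_contDiff hf i).continuous).pow 2)
  have hlapc : Continuous (lap f) := lap_continuous hf
  have hupos : ∀ x, 0 < u x := fun x => Real.exp_pos _
  -- integrability
  have I1 : IntegrableOn u D := huc.continuousOn.integrableOn_compact hDcomp
  have I2 : IntegrableOn (fun x => f x * u x) D :=
    (hfc.mul huc).continuousOn.integrableOn_compact hDcomp
  have I3 : IntegrableOn (fun x => lap f x * u x) D :=
    (hlapc.mul huc).continuousOn.integrableOn_compact hDcomp
  have I4 : IntegrableOn (fun x => W x * u x) D :=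
    (hWc.mul huc).continuousOn.integrableOn_compact hDcomp
  set J : ℝ := ∫ x in D, f x * u x with hJ_def
  set hh : ℝ := ∫ x in D, u x with hh_def
  set L : ℝ := ∫ x in D, lap f x * u x with hL_def
  set X : ℝ := ∫ x in D, W x * u x with hX_def
  -- E1 : s * X ≤ L
  have E1 : s * X ≤ L := VolAux2.div_ineq f hf hf0 hproper s t hs0
  have Ia : IntegrableOn (fun x => a * u x) D :=
    (continuous_const.mul huc).continuousOn.integrableOn_compact hDcomp
  have Ib : IntegrableOn (fun x => β * (f x * u x)) D :=
    (continuous_const.mul (hfc.mul huc)).continuousOn.integrableOn_compact hDcomp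
  have IA : IntegrableOn (fun x => a * u x - lap f x * u x) D :=
    ((continuous_const.mul huc).sub (hlapc.mul huc)).continuousOn.integrableOn_compact hDcomp
  have IC : IntegrableOn (fun x => α * (W x * u x)) D :=
    (continuous_const.mul (hWc.mul huc)).continuousOn.integrableOn_compact hDcomp
  have IRHS : IntegrableOn (fun x => a * u x - lap f x * u x + α * (W x * u x)) D :=
    (((continuous_const.mul huc).sub (hlapc.mul huc)).add
      (continuous_const.mul (hWc.mul huc))).continuousOn.integrableOn_compact hDcomp
  -- E2 : L ≤ a * hh
  have E2 : L ≤ a * hh := by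
    have hmono : ∫ x in D, lap f x * u x ≤ ∫ x in D, a * u x := by
      apply setIntegral_mono_on I3 Ia hDmeas
      intro x _
      exact mul_le_mul_of_nonneg_right (h2 x) (hupos x).le
    calc L ≤ ∫ x in D, a * u x := hmono
      _ = a * hh := integral_const_mul a u
  -- E3
  have E3 : β * J ≤ a * hh - L + α * X := by
    have hmono : ∫ x in D, β * (f x * u x)
        ≤ ∫ x in D, (a * u x - lap f x * u x + α * (W x * u x)) := by
      apply setIntegral_mono_on Ib IRHS hDmeas
      intro x _
      have hgrad : ‖∇ f x‖ ^ 2 = W x := VolAux.norm_grad_sq f x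
      have hhx := h1 x
      rw [hgrad] at hhx
      have hux := (hupos x).le
      nlinarith [mul_le_mul_of_nonneg_right hhx hux]
    have e1 : ∫ x in D, β * (f x * u x) = β * J := integral_const_mul β _
    have e2 : ∫ x in D, (a * u x - lap f x * u x + α * (W x * u x))
        = a * hh - L + α * X := by
      rw [integral_add IA IC, integral_sub Ia I3, integral_const_mul, integral_const_mul]
    rw [e1, e2] at hmono
    exact hmono
  -- combine
  have hfinal : β * J * s ≤ a * α * hh := by
    nlinarith [mul_le_mul_of_nonneg_left E3 hs0.le,
      mul_le_mul_of_nonneg_left E1 hα.le,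
      mul_le_mul_of_nonneg_left E2 (sub_nonneg.mpr hsα)]
  have hrw : a * α / s * hh = a * α * hh / s := by ring
  rw [hrw, le_div_iff₀ hs0]
  exact hfinal

lemma h_hasDerivAt (f : EuclideanSpace ℝ (Fin d) → ℝ) (hf : ContDiff ℝ 2 f)
    (hf0 : ∀ x, 0 ≤ f x)
    (hproper : ∀ K : Set ℝ, IsCompact K → IsCompact (f ⁻¹' K))
    (t : ℝ) (σ : ℝ) (hσ : 0 < σ) :
    HasDerivAt (fun s => ∫ x in f ⁻¹' Set.Iic t, exp (-(s * f x)))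
      (-∫ x in f ⁻¹' Set.Iic t, f x * exp (-(σ * f x))) σ := by
  classical
  set D : Set (EuclideanSpace ℝ (Fin d)) := f ⁻¹' Set.Iic t with hD_def
  have hfc : Continuous f := hf.continuous
  have hDeq : D = f ⁻¹' Set.Icc 0 t := by
    ext x; simp [hD_def, Set.mem_preimage, hf0 x]
  have hDcomp : IsCompact D := hDeq ▸ hproper _ isCompact_Icc
  set μ : Measure (EuclideanSpace ℝ (Fin d)) := volume.restrict D with hμ_def
  set F : ℝ → EuclideanSpace ℝ (Fin d) → ℝ := fun s x => exp (-(s * f x)) with hF_def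
  set F' : ℝ → EuclideanSpace ℝ (Fin d) → ℝ := fun s x => -(f x * exp (-(s * f x))) with hF'_def
  have key := hasDerivAt_integral_of_dominated_loc_of_deriv_le
    (μ := μ) (F := F) (F' := F') (x₀ := σ) (bound := fun x => f x)
    (Metric.ball_mem_nhds σ (half_pos hσ))
    (Filter.Eventually.of_forall (fun s =>
      ((Real.continuous_exp.comp ((continuous_const.mul hfc).neg)).aestronglyMeasurable)))
    (((Real.continuous_exp.comp
      ((continuous_const.mul hfc).neg)).continuousOn.integrableOn_compact hDcomp))
    (((hfc.mul (Real.continuous_exp.comp ((continuous_const.mul hfc).neg))).neg).aestronglyMeasurable)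
    ?_ (hfc.continuousOn.integrableOn_compact hDcomp) ?_
  · have := key.2
    have he : (∫ a, F' σ a ∂μ) = -∫ x in D, f x * exp (-(σ * f x)) := by
      rw [hF'_def]
      exact integral_neg _
    rwa [he] at this
  · filter_upwards with x
    intro s hs
    have hs2 : σ / 2 ≤ s := by
      have := abs_lt.mp (mem_ball_iff_norm.mp hs)
      have h := abs_lt.mp (by simpa [Real.dist_eq] using mem_ball_iff_norm.mp hs)
      linarith [h.1]
    have hspos : 0 < s := by linarith
    have hexple : exp (-(s * f x)) ≤ 1 := by
      apply Real.exp_le_one_iff.mpr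
      have := hf0 x
      nlinarith
    have : ‖F' s x‖ = f x * exp (-(s * f x)) := by
      rw [hF'_def]
      simp only [norm_neg, Real.norm_eq_abs]
      rw [abs_of_nonneg (mul_nonneg (hf0 x) (Real.exp_pos _).le)]
    rw [this]
    nlinarith [hf0 x, Real.exp_pos (-(s * f x))]
  · filter_upwards with x
    intro s _
    have hd : HasDerivAt (fun s : ℝ => -(s * f x)) (-(f x)) s := by
      have := ((hasDerivAt_id' s).mul_const (f x)).neg; rwa [one_mul] at this
    have := (Real.hasDerivAt_exp (-(s * f x))).comp s hd
    simpa [hF_def, hF'_def, mul_comm, Function.comp_def] using this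

lemma h_rpow_mono (f : EuclideanSpace ℝ (Fin d) → ℝ) (hf : ContDiff ℝ 2 f)
    (hf0 : ∀ x, 0 ≤ f x)
    (hproper : ∀ K : Set ℝ, IsCompact K → IsCompact (f ⁻¹' K))
    (α β a : ℝ) (hα : 0 < α) (hβ : 0 < β)
    (h1 : ∀ x, lap f x - α * ‖∇ f x‖ ^ 2 + β * f x ≤ a)
    (h2 : ∀ x, lap f x ≤ a)
    (t : ℝ) (s₀ : ℝ) (hs₀ : 0 < s₀) (hs₀α : s₀ ≤ α) :
    s₀ ^ (α * a / β) * ∫ x in f ⁻¹' Set.Iic t, exp (-(s₀ * f x))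
      ≤ α ^ (α * a / β) * ∫ x in f ⁻¹' Set.Iic t, exp (-(α * f x)) := by
  classical
  set c : ℝ := α * a / β with hc_def
  set h : ℝ → ℝ := fun s => ∫ x in f ⁻¹' Set.Iic t, exp (-(s * f x)) with hh_def
  set J : ℝ → ℝ := fun s => ∫ x in f ⁻¹' Set.Iic t, f x * exp (-(s * f x)) with hJ_def
  set F : ℝ → ℝ := fun s => s ^ c * h s with hF_def
  have hFd : ∀ σ ∈ Set.Icc s₀ α,
      HasDerivAt F (c * σ ^ (c - 1) * h σ + σ ^ c * (-(J σ))) σ := by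
    intro σ hσ
    have hσpos : 0 < σ := lt_of_lt_of_le hs₀ hσ.1
    have hrp : HasDerivAt (fun s : ℝ => s ^ c) (c * σ ^ (c - 1)) σ := by
      exact Real.hasDerivAt_rpow_const (x := σ) (p := c) (Or.inl hσpos.ne')
    exact hrp.mul (h_hasDerivAt f hf hf0 hproper t σ hσpos)
  have hmono : MonotoneOn F (Set.Icc s₀ α) := by
    apply monotoneOn_of_deriv_nonneg (convex_Icc s₀ α)
    · exact fun σ hσ => (hFd σ hσ).continuousAt.continuousWithinAt
    · intro σ hσ
      rw [interior_Icc] at hσ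
      exact ((hFd σ (Set.mem_Icc_of_Ioo hσ)).differentiableAt).differentiableWithinAt
    · intro σ hσ
      rw [interior_Icc] at hσ
      have hσpos : 0 < σ := lt_trans hs₀ hσ.1
      rw [(hFd σ (Set.mem_Icc_of_Ioo hσ)).deriv]
      have hkm := key_moment f hf hf0 hproper α β a hα hβ h1 h2 t σ hσpos hσ.2.le
      have hσJ : σ * J σ ≤ c * h σ := by
        have e1 : σ * (a * α / σ * h σ) = a * α * h σ := by field_simp
        have h3 : σ * (β * J σ) ≤ a * α * h σ := by
          calc σ * (β * J σ) ≤ σ * (a * α / σ * h σ) :=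
                mul_le_mul_of_nonneg_left hkm hσpos.le
            _ = a * α * h σ := e1
        have h4 : β * (σ * J σ) ≤ β * (c * h σ) := by
          have e2 : β * (c * h σ) = a * α * h σ := by
            rw [hc_def, show β * (α * a / β * h σ) = (β / β) * (α * a * h σ) from by ring,
              div_self hβ.ne', one_mul]
            ring
          have e3 : σ * (β * J σ) = β * (σ * J σ) := by ring
          rw [e2]; linarith [e3 ▸ h3]
        exact le_of_mul_le_mul_left h4 hβ
      have hpow : σ ^ c = σ ^ (c - 1) * σ := by
        rw [← Real.rpow_add_one hσpos.ne' (c - 1)]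
        ring_nf
      rw [hpow]
      have hp : (0:ℝ) ≤ σ ^ (c - 1) := Real.rpow_nonneg hσpos.le _
      nlinarith [mul_le_mul_of_nonneg_left hσJ hp]
  exact hmono (Set.left_mem_Icc.mpr hs₀α) (Set.right_mem_Icc.mpr hs₀α) hs₀α

end VolAux2

theorem volume_sublevel_le {d : ℕ} (f : EuclideanSpace ℝ (Fin d) → ℝ)
    (hf : ContDiff ℝ 2 f) (hf0 : ∀ x, 0 ≤ f x)
    (hproper : ∀ K : Set ℝ, IsCompact K → IsCompact (f ⁻¹' K))
    (α β a : ℝ) (hα : 0 < α) (hβ : 0 < β)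
    (h1 : ∀ x, lap f x - α * ‖∇ f x‖ ^ 2 + β * f x ≤ a)
    (h2 : ∀ x, lap f x ≤ a)
    (r : ℝ) (hr : 1 ≤ r) :
    volume {x : EuclideanSpace ℝ (Fin d) | 2 * Real.sqrt (f x) ≤ Real.sqrt (2 * β) * r} ≤
      ENNReal.ofReal (Real.exp (α * β / 2) * r ^ (2 * α * a / β)) *
        ∫⁻ x in {x : EuclideanSpace ℝ (Fin d) | 2 * Real.sqrt (f x) ≤ Real.sqrt (2 * β) * r},
          ENNReal.ofReal (Real.exp (-α * f x)) := by
  classical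
  set t : ℝ := β * r ^ 2 / 2 with ht_def
  have hr0 : (0:ℝ) < r := lt_of_lt_of_le one_pos hr
  have hset : {x : EuclideanSpace ℝ (Fin d) | 2 * Real.sqrt (f x) ≤ Real.sqrt (2 * β) * r}
      = f ⁻¹' Set.Iic t := by
    ext x
    simp only [Set.mem_setOf_eq, Set.mem_preimage, Set.mem_Iic]
    constructor
    · intro hx
      have h4 : (2 * Real.sqrt (f x)) ^ 2 ≤ (Real.sqrt (2 * β) * r) ^ 2 :=
        pow_le_pow_left₀ (by positivity) hx 2
      rw [mul_pow, mul_pow, Real.sq_sqrt (hf0 x),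
        Real.sq_sqrt (by positivity : (0:ℝ) ≤ 2 * β)] at h4
      nlinarith
    · intro hx
      have hle : 2 * Real.sqrt (f x) = Real.sqrt (4 * f x) := by
        rw [show (4:ℝ) * f x = 2 ^ 2 * f x from by ring,
          Real.sqrt_mul (by positivity) (f x), Real.sqrt_sq (by norm_num : (0:ℝ) ≤ 2)]
      have hre : Real.sqrt (2 * β) * r = Real.sqrt (2 * β * r ^ 2) := by
        rw [Real.sqrt_mul (by positivity) (r ^ 2), Real.sqrt_sq hr0.le]
      rw [hle, hre]
      apply Real.sqrt_le_sqrt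
      nlinarith
  rw [hset]
  simp only [neg_mul]
  set D := f ⁻¹' Set.Iic t with hD_def
  have hfc := hf.continuous
  have hDeq : D = f ⁻¹' Set.Icc 0 t := by ext x; simp [hD_def, hf0 x]
  have hDcomp : IsCompact D := hDeq ▸ hproper _ isCompact_Icc
  have hDmeas : MeasurableSet D := (isClosed_Iic.preimage hfc).measurableSet
  have hDfin : volume D < ⊤ := hDcomp.measure_lt_top
  set s₀ : ℝ := α / r ^ 2 with hs₀_def
  have hs₀pos : 0 < s₀ := by positivity
  have hs₀α : s₀ ≤ α := by
    rw [hs₀_def]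
    apply div_le_self hα.le
    nlinarith
  set hα' : ℝ := ∫ x in D, exp (-(α * f x)) with hhα_def
  set hs' : ℝ := ∫ x in D, exp (-(s₀ * f x)) with hhs_def
  have Iα : IntegrableOn (fun x => exp (-(α * f x))) D :=
    (Real.continuous_exp.comp
      ((continuous_const.mul hfc).neg)).continuousOn.integrableOn_compact hDcomp
  have Is : IntegrableOn (fun x => exp (-(s₀ * f x))) D :=
    (Real.continuous_exp.comp
      ((continuous_const.mul hfc).neg)).continuousOn.integrableOn_compact hDcomp
  have hVle : (volume D).toReal ≤ exp (s₀ * t) * hs' := by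
    have h1' : ∫ x in D, (1:ℝ) ≤ ∫ x in D, exp (s₀ * t) * exp (-(s₀ * f x)) := by
      apply setIntegral_mono_on (integrableOn_const hDfin.ne)
        (Is.const_mul _) hDmeas
      intro x hx
      rw [← Real.exp_add, ← Real.exp_zero]
      apply Real.exp_le_exp.mpr
      have hfx : f x ≤ t := hx
      nlinarith [hs₀pos.le]
    rw [setIntegral_const, integral_const_mul] at h1'
    simpa [hhs_def, Measure.real] using h1'
  have hstep2 := VolAux2.h_rpow_mono f hf hf0 hproper α β a hα hβ h1 h2 t s₀ hs₀pos hs₀α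
  set c : ℝ := α * a / β with hc_def
  have hc2 : (0:ℝ) < s₀ ^ c := Real.rpow_pos_of_pos hs₀pos c
  have hstep3 : hs' ≤ r ^ (2 * α * a / β) * hα' := by
    have hdiv : hs' ≤ (α ^ c / s₀ ^ c) * hα' := by
      rw [div_mul_eq_mul_div, le_div_iff₀ hc2]
      calc hs' * s₀ ^ c = s₀ ^ c * hs' := mul_comm _ _
        _ ≤ α ^ c * hα' := hstep2
    have hpow : α ^ c / s₀ ^ c = r ^ (2 * α * a / β) := by
      rw [← Real.div_rpow hα.le hs₀pos.le]
      have he : α / s₀ = r ^ (2:ℕ) := by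
        rw [hs₀_def]
        field_simp
      rw [he, ← Real.rpow_natCast r 2, ← Real.rpow_mul hr0.le]
      congr 1
      push_cast
      rw [hc_def]
      ring
    rwa [hpow] at hdiv
  have hexp : exp (s₀ * t) = exp (α * β / 2) := by
    congr 1
    rw [hs₀_def, ht_def]
    field_simp
  have RI : (volume D).toReal ≤ (exp (α * β / 2) * r ^ (2 * α * a / β)) * hα' := by
    calc (volume D).toReal ≤ exp (s₀ * t) * hs' := hVle
      _ ≤ exp (s₀ * t) * (r ^ (2 * α * a / β) * hα') :=
          mul_le_mul_of_nonneg_left hstep3 (Real.exp_pos _).le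
      _ = (exp (α * β / 2) * r ^ (2 * α * a / β)) * hα' := by rw [hexp]; ring
  have hlin : ∫⁻ x in D, ENNReal.ofReal (exp (-(α * f x))) = ENNReal.ofReal hα' := by
    rw [hhα_def,
      ← ofReal_integral_eq_lintegral_ofReal Iα
        (Filter.Eventually.of_forall (fun x => (Real.exp_pos _).le))]
  rw [hlin, ← ENNReal.ofReal_toReal hDfin.ne, ← ENNReal.ofReal_mul (by positivity)]
  exact ENNReal.ofReal_le_ofReal RI
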